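/- Let (Z_n)_{n≥1} be a sequence of independent standard normal random variables. Then the partial sums ∑_{n=1}^N Z_n^2 / ((n - 1/2)π) diverge to +∞ as N → ∞ almost surely. -/

import Mathlib

open MeasureTheory ProbabilityTheory Filter Topology

open Finset in
private lemma det_aux (b : ℕ → ℝ) (hb : ∀ n, 0 ≤ b n) {m : ℝ} (hm : 0 < m)
    (h : Tendsto (fun n : ℕ => (∑ i ∈ range n, b i) / n) atTop (𝓝 m)) :
    Tendsto (fun N => ∑ n ∈ range N,
      b n / ((((n : ℝ) + 1) - 1 / 2) * Real.pi)) atTop atTop := by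
  have hpi := Real.pi_pos
  set w : ℕ → ℝ := fun n => b n / ((((n : ℝ) + 1) - 1 / 2) * Real.pi) with hw
  have hwpos : ∀ n, 0 ≤ w n := by
    intro n
    apply div_nonneg (hb n)
    have h1 : (0:ℝ) ≤ (n:ℝ) := Nat.cast_nonneg n
    nlinarith [hpi]
  set T : ℕ → ℝ := fun N => ∑ n ∈ range N, w n with hT
  have hmono : Monotone T := fun N M hNM =>
    Finset.sum_le_sum_of_subset_of_nonneg (Finset.range_subset_range.2 hNM)
      (fun i _ _ => hwpos i)
  obtain ⟨N0, hN0⟩ := (Metric.tendsto_atTop.mp h) (m/4) (by positivity)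
  set N1 := max N0 1 with hN1
  have hN1pos : 1 ≤ N1 := le_max_right _ _
  have hS : ∀ n, N1 ≤ n → (3/4)*m*n ≤ (∑ i ∈ range n, b i) ∧
      (∑ i ∈ range n, b i) ≤ (5/4)*m*n := by
    intro n hn
    have hn0 : (0:ℝ) < n := by
      have : 1 ≤ n := le_trans hN1pos hn
      exact_mod_cast this
    have hd := hN0 n (le_trans (le_max_left _ _) hn)
    rw [Real.dist_eq, abs_lt] at hd
    have heq : (∑ i ∈ range n, b i) = ((∑ i ∈ range n, b i) / n) * n :=
      (div_mul_cancel₀ _ hn0.ne').symm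
    constructor
    · rw [heq]; nlinarith [hd.1]
    · rw [heq]; nlinarith [hd.2]
  have hblock : ∀ n, N1 ≤ n → T n + m/(8*Real.pi) ≤ T (2*n) := by
    intro n hn
    have hn0 : (0:ℝ) < n := by
      have : 1 ≤ n := le_trans hN1pos hn
      exact_mod_cast this
    have hsplit : T (2*n) = T n + ∑ j ∈ Finset.Ico n (2*n), w j := by
      rw [hT]
      simp only [Finset.range_eq_Ico]
      rw [← Finset.sum_Ico_consecutive _ (Nat.zero_le n) (by omega)]
    have hterm : ∀ j ∈ Finset.Ico n (2*n), b j / (2*(n:ℝ)*Real.pi) ≤ w j := by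
      intro j hj
      rw [Finset.mem_Ico] at hj
      have hj2 : (((j:ℝ) + 1) - 1/2) ≤ 2*(n:ℝ) := by
        have : (j:ℝ) + 1 ≤ 2*(n:ℝ) := by exact_mod_cast hj.2
        linarith
      have hjpos : (0:ℝ) < ((j:ℝ) + 1) - 1/2 := by
        have := Nat.cast_nonneg (α := ℝ) j
        push_cast
        linarith
      show b j / (2*(n:ℝ)*Real.pi) ≤ b j / ((((j:ℝ) + 1) - 1/2)*Real.pi)
      gcongr
      exact hb j
    have hsum : ((∑ i ∈ range (2*n), b i) - ∑ i ∈ range n, b i) / (2*(n:ℝ)*Real.pi)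
        ≤ ∑ j ∈ Finset.Ico n (2*n), w j := by
      have h1 : ∑ j ∈ Finset.Ico n (2*n), b j / (2*(n:ℝ)*Real.pi)
          ≤ ∑ j ∈ Finset.Ico n (2*n), w j := Finset.sum_le_sum hterm
      rwa [← Finset.sum_div, Finset.sum_Ico_eq_sub _ (by omega)] at h1
    have h1 := hS n hn
    have h2 := hS (2*n) (le_trans hn (by omega))
    have hcast : ((2*n : ℕ):ℝ) = 2*(n:ℝ) := by push_cast; ring
    rw [hcast] at h2
    have key : m/(8*Real.pi) ≤
        ((∑ i ∈ range (2*n), b i) - ∑ i ∈ range n, b i) / (2*(n:ℝ)*Real.pi) := by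
      rw [div_le_div_iff₀ (by positivity) (by positivity)]
      nlinarith [h1.2, h2.1]
    rw [hsplit]
    linarith
  have hgrow : ∀ K : ℕ, T N1 + K*(m/(8*Real.pi)) ≤ T (N1 * 2^K) := by
    intro K
    induction K with
    | zero => simp
    | succ K ih =>
      have h1 : N1 ≤ N1 * 2^K := Nat.le_mul_of_pos_right _ (Nat.pow_pos (by norm_num))
      have h2 := hblock (N1*2^K) h1
      have heq : 2*(N1*2^K) = N1*2^(K+1) := by ring
      rw [heq] at h2
      push_cast
      calc T N1 + ((K:ℝ)+1)*(m/(8*Real.pi))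
          = (T N1 + (K:ℝ)*(m/(8*Real.pi))) + m/(8*Real.pi) := by ring
        _ ≤ T (N1*2^K) + m/(8*Real.pi) := by linarith
        _ ≤ T (N1*2^(K+1)) := h2
  apply tendsto_atTop_atTop_of_monotone hmono
  intro C
  have hc : 0 < m/(8*Real.pi) := by positivity
  obtain ⟨K, hK⟩ := exists_nat_ge ((C - T N1)/(m/(8*Real.pi)))
  refine ⟨N1 * 2^K, ?_⟩
  rw [div_le_iff₀ hc] at hK
  linarith [hgrow K]

private lemma integrable_sq_gaussian : Integrable (fun x : ℝ => x^2) (gaussianReal 0 1) := by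
  rw [gaussianReal_of_var_ne_zero _ one_ne_zero,
    integrable_withDensity_iff (measurable_gaussianPDF 0 1)
      (Eventually.of_forall fun x => ENNReal.ofReal_lt_top)]
  have hpdf : ∀ x : ℝ, (gaussianPDF 0 1 x).toReal = gaussianPDFReal 0 1 x := fun x =>
    ENNReal.toReal_ofReal (gaussianPDFReal_nonneg 0 1 x)
  simp only [hpdf]
  have hmeas : AEStronglyMeasurable (fun x : ℝ => x^2 * gaussianPDFReal 0 1 x) volume :=
    ((measurable_id.pow_const 2).mul (measurable_gaussianPDFReal 0 1)).aestronglyMeasurable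
  apply Integrable.mono'
    (((integrable_exp_neg_mul_sq (show (0:ℝ) < 1/4 by norm_num)).const_mul ((√(2 * Real.pi))⁻¹ * 4)))
    hmeas
  filter_upwards with x
  have hpdfeq : gaussianPDFReal 0 1 x = (√(2 * Real.pi))⁻¹ * Real.exp (-x^2/2) := by
    simp [gaussianPDFReal]
  rw [Real.norm_eq_abs, hpdfeq, abs_of_nonneg (by positivity)]
  have hx : x^2 ≤ 4 * Real.exp (x^2/4) := by
    have := Real.add_one_le_exp (x^2/4)
    nlinarith [Real.exp_pos (x^2/4)]
  have hsplit : Real.exp (-x^2/2) = Real.exp (-x^2/4) * Real.exp (-x^2/4) := by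
    rw [← Real.exp_add]; ring_nf
  have hinv : (0:ℝ) ≤ (√(2 * Real.pi))⁻¹ := by positivity
  calc x^2 * ((√(2 * Real.pi))⁻¹ * Real.exp (-x^2/2))
      ≤ (4 * Real.exp (x^2/4)) * ((√(2 * Real.pi))⁻¹ * Real.exp (-x^2/2)) := by
        apply mul_le_mul_of_nonneg_right hx (by positivity)
    _ = (√(2 * Real.pi))⁻¹ * 4 * (Real.exp (x^2/4) * Real.exp (-x^2/2)) := by ring
    _ = (√(2 * Real.pi))⁻¹ * 4 * Real.exp (-(1/4) * x^2) := by
        rw [← Real.exp_add]; ring_nf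

private lemma sq_gaussian_pos : 0 < ∫ x, x^2 ∂(gaussianReal 0 1) := by
  rw [integral_pos_iff_support_of_nonneg (fun x => sq_nonneg x) integrable_sq_gaussian]
  have hsupp : Function.support (fun x : ℝ => x^2) = {(0:ℝ)}ᶜ := by
    ext x; simp [Function.support, pow_eq_zero_iff]
  rw [hsupp]
  have habs := gaussianReal_absolutelyContinuous' 0 (v := 1) one_ne_zero
  refine pos_iff_ne_zero.mpr fun h0 => ?_
  have h1 : (volume : Measure ℝ) {(0:ℝ)}ᶜ = 0 := habs h0
  have h2 : (volume : Measure ℝ) (Set.Ioi (0:ℝ)) = 0 :=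
    measure_mono_null (fun x hx => Set.mem_compl_singleton_iff.mpr (ne_of_gt hx)) h1
  simp [Real.volume_Ioi] at h2

/-- If `(Z n)` are independent standard normal random variables, then the
partial sums `∑_{n=1}^N Z_n² / ((n - 1/2)π)` diverge to `+∞` almost surely. -/
theorem stmt0 {Ω : Type*} [MeasurableSpace Ω] (P : Measure Ω) [IsProbabilityMeasure P]
    (Z : ℕ → Ω → ℝ) (hmeas : ∀ n, Measurable (Z n))
    (hindep : iIndepFun Z P)
    (hlaw : ∀ n, P.map (Z n) = gaussianReal 0 1) :
    ∀ᵐ ω ∂P, Tendsto (fun N => ∑ n ∈ Finset.range N,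
      (Z (n + 1) ω) ^ 2 / ((((n : ℝ) + 1) - 1 / 2) * Real.pi)) atTop atTop := by
  set X : ℕ → Ω → ℝ := fun n ω => (Z (n+1) ω)^2 with hX
  have hXmeas : ∀ n, Measurable (X n) := fun n => (hmeas (n+1)).pow_const 2
  have hsq : Measurable (fun x : ℝ => x^2) := measurable_id.pow_const 2
  have hint : Integrable (X 0) P := by
    have : Integrable ((fun x : ℝ => x^2) ∘ (Z 1)) P := by
      rw [← integrable_map_measure hsq.aestronglyMeasurable (hmeas 1).aemeasurable, hlaw 1]
      exact integrable_sq_gaussian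
    exact this
  have hindep' : Pairwise (Function.onFun (IndepFun · · P) X) := by
    intro i j hij
    exact (hindep.indepFun (by omega : i + 1 ≠ j + 1)).comp hsq hsq
  have hident : ∀ i, IdentDistrib (X i) (X 0) P P := by
    intro i
    have hz : IdentDistrib (Z (i+1)) (Z 1) P P :=
      ⟨(hmeas _).aemeasurable, (hmeas _).aemeasurable, by rw [hlaw, hlaw]⟩
    exact hz.comp hsq
  have hlln := strong_law_ae_real X hint hindep' hident
  have hmean : P[X 0] = ∫ x, x^2 ∂(gaussianReal 0 1) := by
    rw [← hlaw 1, integral_map (hmeas 1).aemeasurable hsq.aestronglyMeasurable]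
  rw [hmean] at hlln
  filter_upwards [hlln] with ω hω
  exact det_aux (fun n => X n ω) (fun n => sq_nonneg _) sq_gaussian_pos hω
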